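/- Suppose Assumption (*) holds for the two-sided cell c. Then for every d ∈ D and u ∈ U_d one has C_d T_u ≡ T_{du} mod H_{<0}, and for every d ∈ D one has C_d C_d ≡ h_{d,d,d} C_d mod H_{<c}. -/

import Mathlib

open scoped Classical TensorProduct

noncomputable section

namespace KL

variable (Γ : Type) [AddCommGroup Γ] [LinearOrder Γ] [IsOrderedAddMonoid Γ]

/-- The group ring `A = ℤ[Γ]`. -/
abbrev A := AddMonoidAlgebra ℤ Γ

variable {Γ}

/-- The basis element `q^γ` of `A`. -/
def qe (γ : Γ) : A Γ := AddMonoidAlgebra.single γ 1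

/-- `A_{<0}`: the ℤ-span of the `q^γ` with `γ < 0`, i.e. elements supported in negative degrees. -/
def Alt0 (Γ : Type) [AddCommGroup Γ] [LinearOrder Γ] [IsOrderedAddMonoid Γ] : Set (A Γ) :=
  {a : A Γ | ∀ γ ∈ a.coeff.support, γ < 0}

/-- The degree of an element of `A` (`⊥` for `0`). -/
def adeg (a : A Γ) : WithBot Γ := a.coeff.support.max

variable {B W : Type} [Group W] {M : CoxeterMatrix B}
variable {H : Type} [Ring H]

/-- Bundled data of a Coxeter system `(W,S)` together with a positive weight function `L`,
its Hecke algebra `H` over `A = ℤ[Γ]` with standard basis `T`, the bar involution, and the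
Kazhdan-Lusztig basis `C`. -/
structure KLData (M : CoxeterMatrix B) (W : Type) [Group W] (Γ : Type)
    [AddCommGroup Γ] [LinearOrder Γ] [IsOrderedAddMonoid Γ] (H : Type) [Ring H] [Algebra (A Γ) H] where
  /-- the Coxeter system -/
  cs : CoxeterSystem M W
  /-- the weight function -/
  L : W → Γ
  L_add : ∀ w w' : W, cs.length (w * w') = cs.length w + cs.length w' →
    L (w * w') = L w + L w'
  L_pos : ∀ w : W, w ≠ 1 → 0 < L w
  /-- the standard basis `T_w` of the Hecke algebra -/
  bT : Module.Basis W (A Γ) H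
  T_mul : ∀ w w' : W, cs.length (w * w') = cs.length w + cs.length w' →
    bT w * bT w' = bT (w * w')
  T_quad : ∀ i : B,
    (bT (cs.simple i) + algebraMap (A Γ) H (qe (-(L (cs.simple i))))) *
      (bT (cs.simple i) - algebraMap (A Γ) H (qe (L (cs.simple i)))) = 0
  /-- the bar involution -/
  bar : H →+* H
  bar_bar : ∀ h : H, bar (bar h) = h
  bar_q : ∀ γ : Γ, bar (algebraMap (A Γ) H (qe γ)) = algebraMap (A Γ) H (qe (-γ))
  bar_T : ∀ w : W, bar (bT w) * bT w⁻¹ = 1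
  bar_T' : ∀ w : W, bT w⁻¹ * bar (bT w) = 1
  /-- the Kazhdan-Lusztig basis `C_w` -/
  bC : Module.Basis W (A Γ) H
  bar_C : ∀ w : W, bar (bC w) = bC w
  C_mod : ∀ w v : W, bT.repr (bC w - bT w) v ∈ Alt0 Γ

namespace KLData

variable [Algebra (A Γ) H] (d : KLData M W Γ H)

/-- `T_w` -/
def T (w : W) : H := d.bT w

/-- `C_w` -/
def C (w : W) : H := d.bC w

/-- `H_{<0} = ⊕_w A_{<0} T_w`. -/
def Hlt0 : Set H := {h : H | ∀ w : W, d.bT.repr h w ∈ Alt0 Γ}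

/-- The structure constants `h_{x,y,z}` of the KL basis. -/
def hk (x y z : W) : A Γ := d.bC.repr (d.C x * d.C y) z

/-- One step of the preorder `≤_L` : `x` appears in `C_z C_y` for some `z`. -/
def leLstep (x y : W) : Prop := ∃ z : W, d.bC.repr (d.C z * d.C y) x ≠ 0

/-- The preorder `≤_L`. -/
def leL : W → W → Prop := Relation.ReflTransGen d.leLstep

/-- `x ~_L y` -/
def simL (x y : W) : Prop := d.leL x y ∧ d.leL y x

/-- `x ≤_R y` -/
def leR (x y : W) : Prop := d.leL x⁻¹ y⁻¹

/-- `x ~_R y` -/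
def simR (x y : W) : Prop := d.simL x⁻¹ y⁻¹

/-- The preorder `≤_LR`, generated by `≤_L` and `≤_R`. -/
def leLR : W → W → Prop :=
  Relation.ReflTransGen (fun x y => d.leLstep x y ∨ d.leLstep x⁻¹ y⁻¹)

/-- `x ~_LR y` -/
def simLR (x y : W) : Prop := d.leLR x y ∧ d.leLR y x

/-- left cells -/
def IsLeftCell (Θ : Set W) : Prop := ∃ x : W, Θ = {y | d.simL x y}

/-- right cells -/
def IsRightCell (Φ : Set W) : Prop := ∃ x : W, Φ = {y | d.simR x y}

/-- two-sided cells -/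
def IsTwoSidedCell (c : Set W) : Prop := ∃ x : W, c = {y | d.simLR x y}

/-- `z < c` for a two-sided cell `c`. -/
def ltc (c : Set W) (z : W) : Prop := z ∉ c ∧ ∀ w ∈ c, d.leLR z w

/-- `z ≤ c` for a two-sided cell `c`. -/
def lec (c : Set W) (z : W) : Prop := ∀ w ∈ c, d.leLR z w

/-- The ideal `H_{<c}`, spanned by the `C_z` with `z < c`. -/
def Hltc (c : Set W) : Submodule (A Γ) H :=
  Submodule.span (A Γ) (d.C '' {z : W | d.ltc c z})

/-- Bruhat order on `W`. -/
def bruhatLE : W → W → Prop :=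
  Relation.ReflTransGen (fun x y => ∃ t : W, d.cs.IsReflection t ∧ y = x * t ∧
    d.cs.length x < d.cs.length y)

/-- Strict Bruhat order on `W`. -/
def bruhatLT (x y : W) : Prop := d.bruhatLE x y ∧ x ≠ y

/-- Duflo order: `x ≤_D y` iff `l(x⁻¹y) = l(y) - l(x)`. -/
def dufloLE (x y : W) : Prop :=
  d.cs.length x + d.cs.length (x⁻¹ * y) = d.cs.length y

/-- The `A`-linear anti-automorphism `♭` of `H` with `T_w ↦ T_{w⁻¹}`. -/
def flat : H →ₗ[A Γ] H := d.bT.constr ℕ (fun w => d.bT w⁻¹)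

/-- `P_{e,z}` : the coefficient of `T_e` in `C_z`. -/
def Pel (z : W) : A Γ := d.bT.repr (d.C z) 1

/-- `Δ(z)`, defined by `P_{e,z} = n_z q^{-Δ(z)} + lower degree terms`. -/
def Del (z : W) : Γ := -(WithBot.unbotD 0 (d.Pel z).coeff.support.max)

/-- `n_z`, defined by `P_{e,z} = n_z q^{-Δ(z)} + lower degree terms`. -/
def nz (z : W) : ℤ := (d.Pel z).coeff (-(d.Del z))

/-- `af : W → Γ` is Lusztig's `a`-function iff for each `z`, `af z` is the (attained)
supremum of the degrees of the `h_{x,y,z}`. -/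
def IsAFunction (af : W → Γ) : Prop :=
  ∀ z : W, (∀ x y : W, adeg (d.hk x y z) ≤ (af z : WithBot Γ)) ∧
    (∃ x y : W, adeg (d.hk x y z) = (af z : WithBot Γ))

/-- `γ_{x,y,z}` : the coefficient of `q^{a(z⁻¹)}` in `h_{x,y,z⁻¹}`. -/
def gam (af : W → Γ) (x y z : W) : ℤ := (d.hk x y z⁻¹).coeff (af z⁻¹)

/-- The set `𝒟 = {z | a(z) = Δ(z)}`. -/
def Dset (af : W → Γ) : Set W := {z : W | af z = d.Del z}

end KLData

variable [Algebra (A Γ) H]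

/-- Assumption (*): a two-sided cell `c` equipped with subsets `D ⊆ c` and
`B_d, U_d ⊆ W` (`d ∈ D`) satisfying conditions (ia)-(iv). -/
structure CellDecomp (d : KLData M W Γ H) (c : Set W) where
  isCell : d.IsTwoSidedCell c
  D : Set W
  Bd : W → Set W
  Ud : W → Set W
  D_sub : D ⊆ c
  -- (ia) : c = c⁻¹ = ⊔_{d ∈ D} B_d d U_d (disjoint union)
  c_inv : ∀ w : W, w ∈ c ↔ w⁻¹ ∈ c
  c_eq : c = ⋃ d0 ∈ D, {w : W | ∃ b ∈ Bd d0, ∃ u ∈ Ud d0, w = b * d0 * u}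
  disj : ∀ d1 ∈ D, ∀ d2 ∈ D, d1 ≠ d2 →
    Disjoint {w : W | ∃ b ∈ Bd d1, ∃ u ∈ Ud d1, w = b * d1 * u}
             {w : W | ∃ b ∈ Bd d2, ∃ u ∈ Ud d2, w = b * d2 * u}
  -- (ib)
  len_add : ∀ d0 ∈ D, ∀ b ∈ Bd d0, ∀ u ∈ Ud d0,
    d.cs.length (b * d0 * u) = d.cs.length b + d.cs.length d0 + d.cs.length u
  -- (ic)
  one_mem_B : ∀ d0 ∈ D, (1 : W) ∈ Bd d0
  one_mem_U : ∀ d0 ∈ D, (1 : W) ∈ Ud d0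
  Binv_sub_U : ∀ d0 ∈ D, ∀ b ∈ Bd d0, b⁻¹ ∈ Ud d0
  -- (id)
  not_mem_c : ∀ d0 ∈ D, ∀ w : W, w ∉ Ud d0 →
    (∀ i : B, d.bruhatLE (d.cs.simple i) d0 →
      d.cs.length (d.cs.simple i * w) = d.cs.length w + 1) → d0 * w ∉ c
  -- (iia) : each d ∈ D is an involution in a finite parabolic subgroup
  d_inv : ∀ d0 ∈ D, d0 * d0 = 1 ∧ d0 ≠ 1
  d_parabolic : ∀ d0 ∈ D, ∃ I : Set B,
    (Subgroup.closure (d.cs.simple '' I) : Set W).Finite ∧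
    d0 ∈ Subgroup.closure (d.cs.simple '' I)
  s_len : ∀ d0 ∈ D, ∀ i : B, d.bruhatLE (d.cs.simple i) d0 →
    ∀ u ∈ Ud d0, d.cs.length (d.cs.simple i * u) = d.cs.length u + 1
  -- (iib)
  TsC : ∀ d0 ∈ D, ∀ i : B, d.bruhatLE (d.cs.simple i) d0 →
    ∃ a : A Γ, d.T (d.cs.simple i) * d.C d0 - a • d.C d0 ∈ d.Hltc c
  -- (iic)
  h_ne : ∀ d0 ∈ D, d.hk d0 d0 d0 ≠ 0
  -- (iii)
  dU_rightCell : ∀ d0 ∈ D, d.IsRightCell {w : W | ∃ u ∈ Ud d0, w = d0 * u}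
  -- (iv)
  TCT : ∀ d0 ∈ D, ∀ b ∈ Bd d0, ∀ u ∈ Ud d0,
    ∃ h0 ∈ d.Hlt0, ∃ h1 ∈ d.Hltc c,
      d.T b * d.C d0 * d.T u - d.T (b * d0 * u) = h0 + h1

namespace CellDecomp

variable {d : KLData M W Γ H} {c : Set W} (cd : CellDecomp d c)

/-- `F` is the element `F_w` : `F = T_w + Σ_{y ∈ U_d, y < w} p_{y,w} T_y` with
`p_{y,w} ∈ A_{<0}`, and `C_d F ≡ C_{dw} mod H_{<c}`. -/
def IsF (d0 w : W) (F : H) : Prop :=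
  (d.bT.repr F w = 1 ∧
    ∀ y : W, y ≠ w → d.bT.repr F y ≠ 0 →
      y ∈ cd.Ud d0 ∧ d.bruhatLT y w ∧ d.bT.repr F y ∈ Alt0 Γ) ∧
  d.C d0 * F - d.C (d0 * w) ∈ d.Hltc c

/-- The right cell `Φ_{b,d} = b d U_d`. -/
def Phi (b d0 : W) : Set W := {x : W | ∃ u ∈ cd.Ud d0, x = b * d0 * u}

/-- The left cell `Θ_{b,d} = Φ_{b,d}⁻¹`. -/
def Theta (b d0 : W) : Set W := {x : W | ∃ u ∈ cd.Ud d0, x = u⁻¹ * d0 * b⁻¹}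

end CellDecomp

/-- The Coxeter matrix of affine type C̃2: generators `s0 s1 s2`,
`(s0 s1)⁴ = (s1 s2)⁴ = (s0 s2)² = 1`. -/
def Ct2 : CoxeterMatrix (Fin 3) where
  M := !![1, 4, 2; 4, 1, 4; 2, 4, 1]
  isSymm := by decide
  diagonal := by decide
  off_diagonal := by intro i i'; fin_cases i <;> fin_cases i' <;> simp

/-- The Coxeter matrix of affine type G̃2: generators `s0 s1 s2`,
`(s0 s1)³ = (s1 s2)⁶ = (s0 s2)² = 1`. -/
def Gt2 : CoxeterMatrix (Fin 3) where
  M := !![1, 3, 2; 3, 1, 6; 2, 6, 1]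
  isSymm := by decide
  diagonal := by decide
  off_diagonal := by intro i i'; fin_cases i <;> fin_cases i' <;> simp

/-- `ξ_γ = q^γ - q^{-γ}`. -/
def xi (γ : Γ) : A Γ := qe γ - qe (-γ)

/-- `η_γ = q^γ + q^{-γ}`. -/
def eta (γ : Γ) : A Γ := qe γ + qe (-γ)


namespace KLData

variable [Algebra (A Γ) H] (d : KLData M W Γ H)

/-- The free `A ⊗_ℤ A`-module with basis `{E_w : w ∈ c}`. -/
abbrev Emod (Γ : Type) [AddCommGroup Γ] [LinearOrder Γ] [IsOrderedAddMonoid Γ] {W : Type} (c : Set W) :=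
  ↥c →₀ (A Γ ⊗[ℤ] A Γ)

/-- `C_x ⬝ E_w = Σ_{z ∈ c} (h_{x,w,z} ⊗ 1) E_z`. -/
def lactB (c : Set W) (x : W) (w : ↥c) : Emod Γ c :=
  Finsupp.mapRange (fun a => a ⊗ₜ[ℤ] (1 : A Γ)) (by simp)
    ((d.bC.repr (d.C x * d.C (w : W))).subtypeDomain (· ∈ c))

/-- The left action of `C_x` on `E`, extended `(A ⊗ A)`-linearly from the basis. -/
def lact (c : Set W) (x : W) (v : Emod Γ c) : Emod Γ c :=
  v.sum fun w t => t • d.lactB c x w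

/-- `E_w ⬝ C_y = Σ_{z ∈ c} (1 ⊗ h_{w,y,z}) E_z`. -/
def ractB (c : Set W) (y : W) (w : ↥c) : Emod Γ c :=
  Finsupp.mapRange (fun a => (1 : A Γ) ⊗ₜ[ℤ] a) (by simp)
    ((d.bC.repr (d.C (w : W) * d.C y)).subtypeDomain (· ∈ c))

/-- The right action of `C_y` on `E`, extended `(A ⊗ A)`-linearly from the basis. -/
def ract (c : Set W) (y : W) (v : Emod Γ c) : Emod Γ c :=
  v.sum fun w t => t • d.ractB c y w

end KLData

end KL

open KL


namespace KLProof

open CoxeterSystem List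

variable {B W : Type} [Group W] {M : CoxeterMatrix B} (cs : CoxeterSystem M W)

local prefix:100 "s" => cs.simple
local prefix:100 "π" => cs.wordProd
local prefix:100 "ℓ" => cs.length

lemma conj_conj (x : W) (j : B) : s j * (s j * x * s j) * s j = x := by
  simp only [← mul_assoc, cs.simple_mul_simple_self, one_mul,
    cs.simple_mul_simple_cancel_right]

lemma conj_cancel (g y : W) : g * (g⁻¹ * y * g) * g⁻¹ = y := by group

lemma conj_cancel' (g y : W) : g⁻¹ * (g * y * g⁻¹) * g = y := by group

lemma conj_pow_succ (g t : W) (k : ℕ) :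
    g ^ k * (g * t * g⁻¹) * (g⁻¹) ^ k = g ^ (k + 1) * t * (g⁻¹) ^ (k + 1) := by
  rw [pow_succ g k, pow_succ' (g⁻¹) k]
  group

/-- The sign-cocycle permutation used to prove the exchange property. -/
noncomputable def exchSigma (i : B) : Function.End (W × ZMod 2) :=
  fun p => (s i * p.1 * s i, p.2 + (if p.1 = s i then 1 else 0))

lemma simple_mul_rho (i j : B) :
    s j * (s i * s j) = (s i * s j)⁻¹ * s j := by
  rw [mul_inv_rev, cs.inv_simple, cs.inv_simple, mul_assoc]

lemma rho_inv_u (i j : B) (r : ℕ) :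
    (s i * s j)⁻¹ * (((s i * s j)⁻¹) ^ r * s j) * (s i * s j)
      = ((s i * s j)⁻¹) ^ (r + 2) * s j := by
  have h : s j * (s i * s j) = (s i * s j)⁻¹ * s j := simple_mul_rho cs i j
  calc (s i * s j)⁻¹ * (((s i * s j)⁻¹) ^ r * s j) * (s i * s j)
      = ((s i * s j)⁻¹ * ((s i * s j)⁻¹) ^ r) * (s j * (s i * s j)) := by
        rw [mul_assoc, mul_assoc, mul_assoc]
    _ = ((s i * s j)⁻¹) ^ (r + 1) * ((s i * s j)⁻¹ * s j) := by
        rw [h, ← pow_succ']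
    _ = ((s i * s j)⁻¹) ^ (r + 2) * s j := by
        rw [← mul_assoc, ← pow_succ]

lemma exchSigma_mul_pow (i j : B) (k : ℕ) (t : W) (e : ZMod 2) :
    ((exchSigma cs i * exchSigma cs j) ^ k) (t, e)
      = ((s i * s j) ^ k * t * ((s i * s j)⁻¹) ^ k,
          e + ∑ r ∈ Finset.range (2 * k),
            (if t = ((s i * s j)⁻¹) ^ r * s j then 1 else 0)) := by
  induction k generalizing t e with
  | zero =>
    simp only [pow_zero, one_mul, mul_one, Nat.mul_zero, Finset.range_zero,
      Finset.sum_empty, add_zero]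
    rfl
  | succ k ih =>
    have hstep : (exchSigma cs i * exchSigma cs j) (t, e)
        = ((s i * s j) * t * (s i * s j)⁻¹,
            e + ((if t = ((s i * s j)⁻¹) ^ 0 * s j then 1 else 0)
              + (if t = ((s i * s j)⁻¹) ^ 1 * s j then 1 else 0))) := by
      show exchSigma cs i (exchSigma cs j (t, e)) = _
      unfold exchSigma
      simp only [Prod.mk.injEq]
      constructor
      · rw [mul_inv_rev, cs.inv_simple, cs.inv_simple]; group
      · have hcond : (s j * t * s j = s i) ↔ (t = ((s i * s j)⁻¹) ^ 1 * s j) := by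
          rw [pow_one, mul_inv_rev, cs.inv_simple, cs.inv_simple]
          constructor
          · intro hh
            rw [← hh]
            exact (conj_conj cs t j).symm
          · intro hh
            rw [hh]
            exact conj_conj cs (s i) j
        rw [hcond, pow_zero, one_mul]
        ring
    rw [pow_succ]
    show ((exchSigma cs i * exchSigma cs j) ^ k)
      ((exchSigma cs i * exchSigma cs j) (t, e)) = _
    rw [hstep, ih]
    have hshift : ∀ r : ℕ,
        ((s i * s j) * t * (s i * s j)⁻¹ = ((s i * s j)⁻¹) ^ r * s j)
          ↔ (t = ((s i * s j)⁻¹) ^ (r + 2) * s j) := by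
      intro r
      rw [← rho_inv_u cs i j r]
      constructor
      · intro hh
        rw [← hh]
        exact (conj_cancel' (s i * s j) t).symm
      · intro hh
        rw [hh]
        exact conj_cancel (s i * s j) _
    simp only [Prod.mk.injEq]
    constructor
    · exact conj_pow_succ (s i * s j) t k
    · have h2 : 2 * (k + 1) = (2 * k + 1) + 1 := by ring
      rw [h2, Finset.sum_range_succ', Finset.sum_range_succ']
      simp only [hshift]
      ring

lemma exch_liftable : M.IsLiftable (exchSigma cs) := by
  intro i j
  funext p
  obtain ⟨t, e⟩ := p
  rw [exchSigma_mul_pow cs i j (M i j) t e]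
  have hρ : (s i * s j) ^ (M i j) = 1 := cs.simple_mul_simple_pow i j
  have hρ' : ((s i * s j)⁻¹) ^ (M i j) = 1 := by
    rw [inv_pow, hρ, inv_one]
  have hsum : ∑ r ∈ Finset.range (2 * M i j),
      (if t = ((s i * s j)⁻¹) ^ r * s j then (1 : ZMod 2) else 0) = 0 := by
    have h2 : 2 * M i j = M i j + M i j := by ring
    rw [h2, Finset.sum_range_add]
    have : ∀ r : ℕ, ((s i * s j)⁻¹) ^ (M i j + r) = ((s i * s j)⁻¹) ^ r := by
      intro r; rw [pow_add, hρ', one_mul]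
    simp only [this]
    rw [← two_mul]
    have h0 : (2 : ZMod 2) = 0 := rfl
    rw [h0, zero_mul]
  rw [hρ, hρ', hsum, one_mul, mul_one, add_zero]
  rfl

/-- The sign-cocycle homomorphism. -/
noncomputable def exchPsi : W →* Function.End (W × ZMod 2) :=
  cs.lift ⟨exchSigma cs, exch_liftable cs⟩

lemma exchPsi_count (ω : List B) (t : W) :
    exchPsi cs (π ω) ((π ω)⁻¹ * t * (π ω), 0)
      = (t, ((cs.leftInvSeq ω).count t : ZMod 2)) := by
  induction ω generalizing t with
  | nil =>
    rw [cs.wordProd_nil, map_one]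
    have h1 : ((1:W)⁻¹ * t * 1, (0:ZMod 2)) = (t, 0) := by simp
    rw [h1]
    simp only [leftInvSeq_nil, List.count_nil, Nat.cast_zero]
    rfl
  | cons i ω ih =>
    rw [cs.wordProd_cons, map_mul]
    have hin : (s i * π ω)⁻¹ * t * (s i * π ω)
        = (π ω)⁻¹ * (s i * t * s i) * (π ω) := by
      rw [mul_inv_rev, cs.inv_simple]; group
    show exchPsi cs (s i) (exchPsi cs (π ω) ((s i * π ω)⁻¹ * t * (s i * π ω), 0)) = _
    rw [hin, ih (s i * t * s i)]
    have hψs : exchPsi cs (s i) = exchSigma cs i := by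
      unfold exchPsi
      exact cs.lift_apply_simple (exch_liftable cs) i
    rw [hψs]
    unfold exchSigma
    simp only [Prod.mk.injEq]
    constructor
    · exact conj_conj cs t i
    · have hlis : cs.leftInvSeq (i :: ω) = s i :: (cs.leftInvSeq ω).map (MulAut.conj (s i)) := rfl
      rw [hlis, List.count_cons]
      have hmap : ((cs.leftInvSeq ω).map (⇑(MulAut.conj (s i)))).count t
          = (cs.leftInvSeq ω).count (s i * t * s i) := by
        have ht : t = MulAut.conj (s i) (s i * t * s i) := by
          simp only [MulAut.conj_apply, cs.inv_simple]
          exact (conj_conj cs t i).symm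
        nth_rewrite 1 [ht]
        exact List.count_map_of_injective _ _ (MulAut.conj (s i)).injective _
      rw [hmap]
      have hiff : (s i * t * s i = s i) ↔ ((s i == t) = true) := by
        rw [beq_iff_eq]
        constructor
        · intro hh
          have h2 := congrArg (fun x => s i * x * s i) hh
          rw [conj_conj cs t i, cs.simple_mul_simple_cancel_right] at h2
          exact h2.symm
        · intro hh
          rw [← hh, cs.simple_mul_simple_cancel_right]
      push_cast
      rw [if_congr hiff rfl rfl]

/-- The exchange property (for simple reflections, left version). -/
lemma exchangeL {ω : List B} (hω : cs.IsReduced ω) (i : B)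
    (hl : ℓ (s i * π ω) < ℓ (π ω)) :
    ∃ j, j < ω.length ∧ s i * π ω = π (ω.eraseIdx j) := by
  obtain ⟨ν, hν, hπν⟩ := cs.exists_reduced_word' (s i * π ω)
  have hπ : π (i :: ν) = π ω := by
    rw [cs.wordProd_cons, ← hπν, cs.simple_mul_simple_cancel_left]
  have e1 := exchPsi_count cs ω (s i)
  have e2 := exchPsi_count cs (i :: ν) (s i)
  rw [hπ] at e2
  have hcnt : ((cs.leftInvSeq ω).count (s i) : ZMod 2)
      = ((cs.leftInvSeq (i :: ν)).count (s i) : ZMod 2) :=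
    congrArg Prod.snd (e1.symm.trans e2)
  have hnotmem : (s i : W) ∉ cs.leftInvSeq ν := by
    intro hmem
    have hinv := cs.isLeftInversion_of_mem_leftInvSeq hν hmem
    have h2 : s i * π ν = π ω := by
      rw [← hπν, cs.simple_mul_simple_cancel_left]
    have h3 : ℓ (π ν) < ℓ (π ω) := by
      rw [← hπν]; exact hl
    have h5 := hinv.2
    rw [h2] at h5
    omega
  have hcnt2 : (cs.leftInvSeq (i :: ν)).count (s i) = 1 := by
    have hlis : cs.leftInvSeq (i :: ν)
        = s i :: (cs.leftInvSeq ν).map (MulAut.conj (s i)) := rfl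
    rw [hlis, List.count_cons]
    have hmap : ((cs.leftInvSeq ν).map (⇑(MulAut.conj (s i)))).count (s i)
        = (cs.leftInvSeq ν).count (s i) := by
      have ht : (s i : W) = MulAut.conj (s i) (s i) := by
        simp [MulAut.conj_apply, cs.inv_simple, cs.simple_mul_simple_cancel_right]
      nth_rewrite 1 [ht]
      exact List.count_map_of_injective _ _ (MulAut.conj (s i)).injective _
    rw [hmap, List.count_eq_zero.mpr hnotmem]
    simp
  rw [hcnt2] at hcnt
  have hmem : (s i : W) ∈ cs.leftInvSeq ω := by
    by_contra hnm
    rw [List.count_eq_zero.mpr hnm] at hcnt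
    simp at hcnt
  obtain ⟨j, hj, hget⟩ := List.getElem_of_mem hmem
  have hjlen : j < ω.length := by
    rwa [cs.length_leftInvSeq] at hj
  refine ⟨j, hjlen, ?_⟩
  rw [← cs.getD_leftInvSeq_mul_wordProd ω j, List.getD_eq_getElem _ 1 hj, hget]

lemma isReduced_cons {i : B} {ω : List B} (h : cs.IsReduced (i :: ω)) :
    cs.IsReduced ω ∧ ℓ (s i * π ω) = ℓ (π ω) + 1 := by
  have h1 : ℓ (π (i :: ω)) = ω.length + 1 := by
    rw [h]; simp
  rw [cs.wordProd_cons] at h1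
  have h2 : ℓ (π ω) ≤ ω.length := cs.length_wordProd_le ω
  have h3 : ℓ (s i * π ω) ≤ ℓ (π ω) + 1 := by
    have := cs.length_mul_le (s i) (π ω)
    rw [cs.length_simple] at this
    omega
  have h4 : ℓ (π ω) = ω.length := by omega
  exact ⟨h4, by omega⟩

/-- Any word can be replaced by a reduced word using a subset of its letters. -/
lemma exists_reduced_word_subset (ω : List B) :
    ∃ ν : List B, cs.IsReduced ν ∧ (∀ i ∈ ν, i ∈ ω) ∧ π ν = π ω := by
  induction ω with
  | nil => exact ⟨[], by simp [CoxeterSystem.IsReduced], by simp, rfl⟩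
  | cons i ω ih =>
    obtain ⟨ν₂, hred, hsub, hprod⟩ := ih
    rcases cs.length_simple_mul (π ν₂) i with hup | hdn
    · refine ⟨i :: ν₂, ?_, ?_, ?_⟩
      · show ℓ (π (i :: ν₂)) = _
        rw [cs.wordProd_cons, hup, hred]
        simp
      · intro x hx
        rcases List.mem_cons.mp hx with h | h
        · exact List.mem_cons.mpr (Or.inl h)
        · exact List.mem_cons.mpr (Or.inr (hsub x h))
      · rw [cs.wordProd_cons, cs.wordProd_cons, hprod]
    · have hlt : ℓ (s i * π ν₂) < ℓ (π ν₂) := by omega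
      obtain ⟨j, hj, hex⟩ := exchangeL cs hred i hlt
      refine ⟨ν₂.eraseIdx j, ?_, ?_, ?_⟩
      · show ℓ (π (ν₂.eraseIdx j)) = _
        rw [← hex, List.length_eraseIdx, if_pos hj]
        have : ℓ (π ν₂) = ν₂.length := hred
        omega
      · intro x hx
        exact List.mem_cons.mpr (Or.inr (hsub x ((ν₂.eraseIdx_sublist j).subset hx)))
      · rw [← hex, cs.wordProd_cons, hprod]

/-- The set of elements expressible as words in the letters of `I`. -/
def WIset (I : Set B) : Set W := {w : W | ∃ ω : List B, (∀ i ∈ ω, i ∈ I) ∧ w = π ω}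

lemma WIset.one_mem (I : Set B) : (1 : W) ∈ WIset cs I :=
  ⟨[], by simp, (cs.wordProd_nil).symm⟩

lemma WIset.mul_mem {I : Set B} {x y : W} (hx : x ∈ WIset cs I) (hy : y ∈ WIset cs I) :
    x * y ∈ WIset cs I := by
  obtain ⟨ω₁, h₁, e₁⟩ := hx
  obtain ⟨ω₂, h₂, e₂⟩ := hy
  refine ⟨ω₁ ++ ω₂, ?_, ?_⟩
  · intro i hi
    rcases List.mem_append.mp hi with h | h
    exacts [h₁ i h, h₂ i h]
  · rw [cs.wordProd_append, e₁, e₂]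

lemma WIset.inv_mem {I : Set B} {x : W} (hx : x ∈ WIset cs I) : x⁻¹ ∈ WIset cs I := by
  obtain ⟨ω, h, e⟩ := hx
  exact ⟨ω.reverse, fun i hi => h i (List.mem_reverse.mp hi), by rw [cs.wordProd_reverse, e]⟩

lemma WIset.simple_mem {I : Set B} {i : B} (hi : i ∈ I) : (s i : W) ∈ WIset cs I :=
  ⟨[i], by simpa using hi, by rw [cs.wordProd_cons, cs.wordProd_nil, mul_one]⟩

lemma WIset.exists_reduced {I : Set B} {x : W} (hx : x ∈ WIset cs I) :
    ∃ ν : List B, cs.IsReduced ν ∧ (∀ i ∈ ν, i ∈ I) ∧ x = π ν := by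
  obtain ⟨ω, h, e⟩ := hx
  obtain ⟨ν, hred, hsub, hprod⟩ := exists_reduced_word_subset cs ω
  exact ⟨ν, hred, fun i hi => h i (hsub i hi), by rw [hprod, e]⟩

/-- If no simple reflection of `W_I` is a left descent of `u`, then lengths add:
`ℓ(yu) = ℓ(y) + ℓ(u)` for all `y ∈ W_I`. -/
lemma WIset.length_add (I : Set B) :
    ∀ (n : ℕ) (u : W), ℓ u = n →
      (∀ i : B, (s i : W) ∈ WIset cs I → ℓ (s i * u) = ℓ u + 1) →
      ∀ y ∈ WIset cs I, ℓ (y * u) = ℓ y + ℓ u := by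
  intro n
  induction n with
  | zero =>
    intro u hu _ y _
    rw [cs.length_eq_zero_iff.mp hu, mul_one]
    simp
  | succ n IH =>
    intro u hu hmin y hy
    obtain ⟨μ, hμred, hμ⟩ := cs.exists_reduced_word' u
    have hμlen : μ.length = n + 1 := by
      have h : ℓ (π μ) = μ.length := hμred
      rw [← hμ] at h; omega
    have hμne : μ ≠ [] := by
      intro h; rw [h] at hμlen; simp at hμlen
    set q := μ.getLast hμne with hq
    set μ' := μ.dropLast with hμ'
    have hsplit : μ' ++ [q] = μ := List.dropLast_append_getLast hμne
    have hμ'red : cs.IsReduced μ' := by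
      rw [hμ', List.dropLast_eq_take]
      exact hμred.take _
    have hμ'len : μ'.length = n := by
      rw [hμ', List.length_dropLast]; omega
    set u' := π μ' with hu'
    have huu' : u = u' * s q := by
      rw [hμ, ← hsplit, cs.wordProd_append, cs.wordProd_cons, cs.wordProd_nil, mul_one]
    have hlu' : ℓ u' = n := by
      have h : ℓ (π μ') = μ'.length := hμ'red
      rw [← hu'] at h; omega
    have hmin' : ∀ i : B, (s i : W) ∈ WIset cs I → ℓ (s i * u') = ℓ u' + 1 := by
      intro i hi
      have h1 : ℓ (s i * u) = n + 2 := by rw [hmin i hi, hu]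
      have h2 : ℓ (s i * u) ≤ ℓ (s i * u') + 1 := by
        rw [huu', ← mul_assoc]
        have := cs.length_mul_le (s i * u') (s q)
        rwa [cs.length_simple] at this
      rcases cs.length_simple_mul u' i with h | h <;> omega
    have IH' := IH u' hlu' hmin'
    have hyu' : ℓ (y * u') = ℓ y + n := by rw [IH' y hy, hlu']
    rcases cs.length_mul_simple (y * u') q with h | h
    · rw [huu', ← mul_assoc, h, hyu', ← huu', hu]
      omega
    · -- contradiction case
      exfalso
      obtain ⟨ν, hνred, hνI, hνy⟩ := WIset.exists_reduced cs hy
      have hνlen : ν.length = ℓ y := by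
        have h : ℓ (π ν) = ν.length := hνred
        rw [← hνy] at h; omega
      -- the reversed word for (y * u')⁻¹
      set ρ := μ'.reverse ++ ν.reverse with hρ
      have hρprod : π ρ = (y * u')⁻¹ := by
        rw [hρ, cs.wordProd_append, cs.wordProd_reverse, cs.wordProd_reverse,
          ← hνy, ← hu', mul_inv_rev]
      have hρred : cs.IsReduced ρ := by
        show ℓ (π ρ) = ρ.length
        rw [hρprod, cs.length_inv, hyu', hρ]
        simp only [List.length_append, List.length_reverse, hνlen, hμ'len]
        omega
      have hlen1 : ℓ (s q * π ρ) < ℓ (π ρ) := by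
        have e1 : s q * π ρ = (y * u' * s q)⁻¹ := by
          rw [hρprod, mul_inv_rev (y * u') (s q), cs.inv_simple]
        rw [e1, hρprod, cs.length_inv, cs.length_inv]
        omega
      obtain ⟨j, hj, hex⟩ := exchangeL cs hρred q hlen1
      by_cases hcase : j < μ'.reverse.length
      · have hsplit2 : ρ.eraseIdx j = μ'.reverse.eraseIdx j ++ ν.reverse := by
          rw [hρ]
          exact List.eraseIdx_append_of_lt_length hcase _
        have e3 : (s q * u'⁻¹) * y⁻¹ = π (μ'.reverse.eraseIdx j) * y⁻¹ := by
          have ee : (s q * u'⁻¹) * y⁻¹ = s q * π ρ := by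
            rw [hρprod]; group
          rw [ee, hex, hsplit2, cs.wordProd_append, cs.wordProd_reverse, ← hνy]
        have e3' : s q * u'⁻¹ = π (μ'.reverse.eraseIdx j) := mul_right_cancel e3
        have e4 : s q * u'⁻¹ = u⁻¹ := by
          rw [huu', mul_inv_rev (u') (s q), cs.inv_simple]
        have e5 : ℓ (u⁻¹) ≤ n - 1 := by
          rw [← e4, e3']
          have h6 := cs.length_wordProd_le (μ'.reverse.eraseIdx j)
          rw [List.length_eraseIdx, if_pos hcase] at h6
          simp only [List.length_reverse] at h6 ⊢
          omega
        rw [cs.length_inv, hu] at e5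
        omega
      · push_neg at hcase
        have hsplit2 : ρ.eraseIdx j = μ'.reverse ++ ν.reverse.eraseIdx (j - μ'.reverse.length) := by
          rw [hρ]
          exact List.eraseIdx_append_of_length_le hcase _
        set z := π (ν.reverse.eraseIdx (j - μ'.reverse.length)) with hz
        have hzI : z ∈ WIset cs I := by
          refine ⟨ν.reverse.eraseIdx (j - μ'.reverse.length), ?_, rfl⟩
          intro x hx
          exact hνI x (List.mem_reverse.mp ((List.eraseIdx_sublist _ _).subset hx))
        have e6 : s q * (y * u')⁻¹ = u'⁻¹ * z := by
          rw [← hρprod, hex, hsplit2, cs.wordProd_append, cs.wordProd_reverse, ← hz, ← hu']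
        set t := u' * s q * u'⁻¹ with ht
        have e7 : z = u' * (s q * (y * u')⁻¹) := by rw [e6]; group
        have e9 : t = z * y := by rw [ht, e7]; group
        have htmem : t ∈ WIset cs I := by
          rw [e9]
          exact WIset.mul_mem cs hzI hy
        have htu' : t * u' = u := by
          rw [ht, huu']
          group
        have hlt : ℓ t = 1 := by
          have h12 := IH' t htmem
          rw [htu', hu, hlu'] at h12
          omega
        obtain ⟨i0, hi0⟩ := cs.length_eq_one_iff.mp hlt
        have hmem0 : (s i0 : W) ∈ WIset cs I := by rw [← hi0]; exact htmem
        have h9 : ℓ (s i0 * u) = n + 2 := by rw [hmin i0 hmem0, hu]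
        have h10 : s i0 * u = u' := by
          rw [← hi0, ht, huu']
          have h11 : u' * s q * u'⁻¹ * (u' * s q) = u' * (s q * s q) := by group
          rw [h11, cs.simple_mul_simple_self, mul_one]
        rw [h10, hlu'] at h9
        omega

/-- The Bruhat order (matching `KL.KLData.bruhatLE` definitionally). -/
def bru : W → W → Prop :=
  Relation.ReflTransGen (fun x y => ∃ t : W, cs.IsReflection t ∧ y = x * t ∧
    cs.length x < cs.length y)

lemma bru_right {w : W} {i : B} (h : ℓ (w * s i) = ℓ w + 1) : bru cs w (w * s i) :=
  Relation.ReflTransGen.single ⟨s i, cs.isReflection_simple i, rfl, by omega⟩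

lemma bru_left {w : W} {i : B} (h : ℓ (s i * w) = ℓ w + 1) : bru cs w (s i * w) := by
  have hrefl : cs.IsReflection (w⁻¹ * s i * w) := by
    have := (cs.isReflection_simple i).conj w⁻¹
    rwa [inv_inv] at this
  refine Relation.ReflTransGen.single ⟨w⁻¹ * s i * w, hrefl, by group, by omega⟩

lemma bru_head : ∀ (ω₂ : List B) (a : B), cs.IsReduced (a :: ω₂) →
    bru cs (s a) (π (a :: ω₂)) := by
  intro ω₂
  induction ω₂ using List.reverseRecOn with
  | nil =>
    intro a _
    rw [cs.wordProd_cons, cs.wordProd_nil, mul_one]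
    exact Relation.ReflTransGen.refl
  | append_singleton ω₂ b IH =>
    intro a hred
    have hform : a :: (ω₂ ++ [b]) = (a :: ω₂) ++ [b] := rfl
    have hpref : cs.IsReduced (a :: ω₂) := by
      have h1 : ((a :: ω₂) ++ [b]).take (a :: ω₂).length = a :: ω₂ := by
        simp
      have h2 := CoxeterSystem.IsReduced.take (hform ▸ hred) (a :: ω₂).length
      rwa [h1] at h2
    have hlen : ℓ (π ((a :: ω₂) ++ [b])) = ℓ (π (a :: ω₂)) + 1 := by
      have h1 : ℓ (π ((a :: ω₂) ++ [b])) = (a :: ω₂).length + 1 := by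
        have := (hform ▸ hred : ℓ (π ((a :: ω₂) ++ [b])) = ((a :: ω₂) ++ [b]).length)
        simpa using this
      have h2 : ℓ (π (a :: ω₂)) = (a :: ω₂).length := hpref
      omega
    have hstep : bru cs (π (a :: ω₂)) (π ((a :: ω₂) ++ [b])) := by
      have he : π ((a :: ω₂) ++ [b]) = π (a :: ω₂) * s b := by
        rw [cs.wordProd_append]
        congr 1
        rw [cs.wordProd_cons, cs.wordProd_nil, mul_one]
      rw [he]
      apply bru_right
      rw [← he]
      exact hlen
    rw [hform]
    exact (IH a hpref).trans hstep

lemma bruhat_letter : ∀ (ω : List B), cs.IsReduced ω → ∀ i ∈ ω, bru cs (s i) (π ω) := by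
  intro ω
  induction ω with
  | nil => simp
  | cons a ω₂ IH =>
    intro hred i hi
    rcases List.mem_cons.mp hi with he | hmem
    · subst he
      exact bru_head cs ω₂ i hred
    · obtain ⟨hred2, hlen2⟩ := isReduced_cons cs hred
      refine (IH hred2 i hmem).trans ?_
      rw [cs.wordProd_cons]
      exact bru_left cs hlen2

end KLProof

namespace KLProof

open KL

variable {Γ : Type} [AddCommGroup Γ] [LinearOrder Γ] [IsOrderedAddMonoid Γ]

lemma alt0_zero : (0 : A Γ) ∈ Alt0 Γ := by
  intro γ hγ
  simp at hγ

lemma alt0_add {a b : A Γ} (ha : a ∈ Alt0 Γ) (hb : b ∈ Alt0 Γ) : a + b ∈ Alt0 Γ := by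
  intro γ hγ
  rcases Finset.mem_union.mp (Finsupp.support_add hγ) with h | h
  exacts [ha γ h, hb γ h]

lemma alt0_neg {a : A Γ} (ha : a ∈ Alt0 Γ) : -a ∈ Alt0 Γ := by
  intro γ hγ
  rw [show (-a).coeff = -a.coeff from rfl, Finsupp.support_neg] at hγ
  exact ha γ hγ

lemma alt0_sub {a b : A Γ} (ha : a ∈ Alt0 Γ) (hb : b ∈ Alt0 Γ) : a - b ∈ Alt0 Γ := by
  rw [sub_eq_add_neg]
  exact alt0_add ha (alt0_neg hb)

lemma alt0_sum {ι : Type*} (t : Finset ι) (f : ι → A Γ)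
    (h : ∀ i ∈ t, f i ∈ Alt0 Γ) : (∑ i ∈ t, f i) ∈ Alt0 Γ := by
  classical
  induction t using Finset.induction_on with
  | empty => simpa using alt0_zero
  | insert _ _ hnotmem ih =>
    rw [Finset.sum_insert hnotmem]
    exact alt0_add (h _ (Finset.mem_insert_self _ _))
      (ih fun i hi => h i (Finset.mem_insert_of_mem hi))

/-- The bar involution on `A`. -/
noncomputable def barA : A Γ ≃+ A Γ :=
  AddMonoidAlgebra.coeffAddEquiv.trans
    ((Finsupp.domCongr (Equiv.neg Γ)).trans AddMonoidAlgebra.coeffAddEquiv.symm)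

lemma barA_apply (a : A Γ) (γ : Γ) : (barA a).coeff γ = a.coeff (-γ) := rfl

lemma barA_qe (γ : Γ) : barA (qe γ : A Γ) = qe (-γ) := by
  apply AddMonoidAlgebra.coeff_injective
  ext δ
  rw [barA_apply]
  show (Finsupp.single γ (1:ℤ)) (-δ) = (Finsupp.single (-γ) (1:ℤ)) δ
  rcases eq_or_ne δ (-γ) with rfl | h
  · simp
  · rw [Finsupp.single_eq_of_ne, Finsupp.single_eq_of_ne h]
    intro h'
    apply h
    rw [← h', neg_neg]

lemma barA_one : barA (1 : A Γ) = 1 := by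
  have h := barA_qe (0 : Γ)
  rw [neg_zero] at h
  exact h

lemma barA_fixed_alt0 {a : A Γ} (h1 : barA a = a) (h2 : a ∈ Alt0 Γ) : a = 0 := by
  ext γ
  simp only [AddMonoidAlgebra.coeff_zero, Finsupp.coe_zero, Pi.zero_apply]
  by_contra hne
  have hγ : γ ∈ a.coeff.support := Finsupp.mem_support_iff.mpr hne
  have hlt := h2 γ hγ
  have h3 : a.coeff (-γ) = a.coeff γ := by rw [← barA_apply, h1]
  have hγ' : -γ ∈ a.coeff.support := Finsupp.mem_support_iff.mpr (by rw [h3]; exact hne)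
  have h4 := h2 _ hγ'
  have h5 : (0:Γ) < -γ := neg_pos.mpr hlt
  exact absurd h4 (not_lt.mpr h5.le)

lemma a_sub_one_alt0_ne_zero {a : A Γ} (h : a - 1 ∈ Alt0 Γ) : a ≠ 0 := by
  intro h0
  rw [h0, zero_sub] at h
  have h1 : (0 : Γ) ∈ (-(1 : A Γ)).coeff.support := by
    rw [show (-(1 : A Γ)).coeff = -(1 : A Γ).coeff from rfl, Finsupp.support_neg]
    rw [Finsupp.mem_support_iff]
    show (Finsupp.single (0:Γ) (1:ℤ)) 0 ≠ 0
    simp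
  exact absurd (h 0 h1) (lt_irrefl 0)

section Hecke

open KL CoxeterSystem

variable {B W : Type} [Group W] {M : CoxeterMatrix B}
variable {H : Type} [Ring H] [Algebra (A Γ) H]
variable (d : KLData M W Γ H)

/-- Generic: coefficients of elements of the span of a sub-family of a basis vanish
outside the sub-family. -/
lemma repr_span_zero {R M₀ ι : Type*} [CommRing R] [AddCommGroup M₀] [Module R M₀]
    (b : Module.Basis ι R M₀) (S : Set ι) {x : M₀}
    (hx : x ∈ Submodule.span R (b '' S)) {z : ι} (hz : z ∉ S) : b.repr x z = 0 := by
  have hle : Submodule.span R (b '' S) ≤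
      LinearMap.ker ((Finsupp.lapply z).comp (b.repr : M₀ →ₗ[R] (ι →₀ R))) := by
    rw [Submodule.span_le]
    rintro _ ⟨y, hy, rfl⟩
    have hyz : y ≠ z := fun h => hz (h ▸ hy)
    simp only [SetLike.mem_coe, LinearMap.mem_ker, LinearMap.comp_apply,
      LinearEquiv.coe_coe, Module.Basis.repr_self, Finsupp.lapply_apply]
    exact Finsupp.single_eq_of_ne' hyz
  exact hle hx

lemma bar_algebraMap (a : A Γ) :
    d.bar (algebraMap (A Γ) H a) = algebraMap (A Γ) H (barA a) := by
  induction a using AddMonoidAlgebra.induction_linear with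
  | zero => simp only [map_zero]
  | add f g hf hg => simp only [map_add, hf, hg]
  | single γ n =>
    have h1 : (AddMonoidAlgebra.single γ n : A Γ) = n • (qe γ : A Γ) := by
      rw [qe, AddMonoidAlgebra.smul_single]
      simp
    rw [h1, map_zsmul, map_zsmul, map_zsmul, d.bar_q, map_zsmul, barA_qe]

lemma bar_smul (a : A Γ) (h : H) : d.bar (a • h) = barA a • d.bar h := by
  rw [Algebra.smul_def, map_mul, bar_algebraMap, ← Algebra.smul_def]

lemma T_one : d.bT 1 = 1 := by
  have h : d.bT 1 * d.bT 1 = d.bT 1 := by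
    have := d.T_mul 1 1 (by simp)
    rwa [mul_one] at this
  have hb : d.bar (d.bT 1) * d.bT 1 = 1 := by
    have := d.bar_T 1
    rwa [inv_one] at this
  calc d.bT 1 = (d.bar (d.bT 1) * d.bT 1) * d.bT 1 := by rw [hb, one_mul]
    _ = d.bar (d.bT 1) * (d.bT 1 * d.bT 1) := by rw [mul_assoc]
    _ = 1 := by rw [h, hb]

/-- `ξ_i = q^{L(s_i)} - q^{-L(s_i)}`. -/
noncomputable def xiL (i : B) : A Γ := xi (d.L (d.cs.simple i))

lemma qe_mul (γ δ : Γ) : (qe γ : A Γ) * qe δ = qe (γ + δ) := by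
  show AddMonoidAlgebra.single γ (1:ℤ) * AddMonoidAlgebra.single δ 1 = _
  rw [AddMonoidAlgebra.single_mul_single, one_mul]
  rfl

lemma qe_zero : (qe 0 : A Γ) = 1 := rfl

lemma T_simple_sq (i : B) :
    d.bT (d.cs.simple i) * d.bT (d.cs.simple i)
      = algebraMap (A Γ) H (xiL d i) * d.bT (d.cs.simple i) + 1 := by
  have h := d.T_quad i
  set T := d.bT (d.cs.simple i)
  set a := algebraMap (A Γ) H (qe (-(d.L (d.cs.simple i))))
  set b := algebraMap (A Γ) H (qe (d.L (d.cs.simple i)))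
  have hab : a * b = 1 := by
    rw [← map_mul, qe_mul, neg_add_cancel, qe_zero, map_one]
  have hTb : T * b = b * T := (Algebra.commutes _ _).symm
  have hexp : (T + a) * (T - b) = T * T - (b - a) * T - 1 := by
    rw [mul_sub, add_mul, add_mul, hTb, hab, sub_mul]
    abel
  rw [hexp, sub_sub] at h
  have h4 : T * T = (b - a) * T + 1 := sub_eq_zero.mp h
  rw [h4]
  congr 1
  rw [← map_sub]
  rfl

lemma bar_T_simple (i : B) :
    d.bar (d.bT (d.cs.simple i))
      = d.bT (d.cs.simple i) - algebraMap (A Γ) H (xiL d i) := by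
  set T := d.bT (d.cs.simple i) with hT
  set c := algebraMap (A Γ) H (xiL d i) with hc
  have hbar : d.bar T * T = 1 := by
    have h := d.bar_T (d.cs.simple i)
    rwa [d.cs.inv_simple] at h
  have hTc : T * c = c * T := (Algebra.commutes _ _).symm
  have hright : T * (T - c) = 1 := by
    rw [mul_sub, T_simple_sq, hTc]
    abel
  calc d.bar T = d.bar T * (T * (T - c)) := by rw [hright, mul_one]
    _ = (d.bar T * T) * (T - c) := by rw [mul_assoc]
    _ = T - c := by rw [hbar, one_mul]

lemma T_mul_left_up {i : B} {w : W}
    (h : d.cs.length (d.cs.simple i * w) = d.cs.length w + 1) :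
    d.bT (d.cs.simple i) * d.bT w = d.bT (d.cs.simple i * w) :=
  d.T_mul _ _ (by rw [h, d.cs.length_simple]; omega)

lemma T_mul_left_down {i : B} {w : W}
    (h : d.cs.length (d.cs.simple i * w) + 1 = d.cs.length w) :
    d.bT (d.cs.simple i) * d.bT w
      = algebraMap (A Γ) H (xiL d i) * d.bT w + d.bT (d.cs.simple i * w) := by
  have h2 : d.bT w = d.bT (d.cs.simple i) * d.bT (d.cs.simple i * w) := by
    rw [T_mul_left_up d (by rw [d.cs.simple_mul_simple_cancel_left]; omega),
      d.cs.simple_mul_simple_cancel_left]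
  calc d.bT (d.cs.simple i) * d.bT w
      = (d.bT (d.cs.simple i) * d.bT (d.cs.simple i)) * d.bT (d.cs.simple i * w) := by
        rw [mul_assoc, ← h2]
    _ = algebraMap (A Γ) H (xiL d i) * (d.bT (d.cs.simple i) * d.bT (d.cs.simple i * w))
          + d.bT (d.cs.simple i * w) := by
        rw [T_simple_sq, add_mul, one_mul, mul_assoc]
    _ = _ := by rw [← h2]

/-- `span{T_z : z ∈ W_I, ℓ(z) < n}`. -/
noncomputable def Tspan (I : Set B) (n : ℕ) : Submodule (A Γ) H :=
  Submodule.span (A Γ) (d.bT '' {z : W | z ∈ WIset d.cs I ∧ d.cs.length z < n})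

lemma Tspan_mono (I : Set B) {n m : ℕ} (h : n ≤ m) : Tspan d I n ≤ Tspan d I m :=
  Submodule.span_mono (Set.image_mono (fun z hz => ⟨hz.1, lt_of_lt_of_le hz.2 h⟩))

lemma mul_Ts_span {I : Set B} {i : B} (hi : i ∈ I) {n : ℕ} {r : H}
    (hr : r ∈ Tspan d I n) : d.bT (d.cs.simple i) * r ∈ Tspan d I (n + 1) := by
  induction hr using Submodule.span_induction with
  | mem x hx =>
    obtain ⟨z, ⟨hzW, hzl⟩, rfl⟩ := hx
    have hmem : d.cs.simple i * z ∈ WIset d.cs I :=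
      WIset.mul_mem d.cs (WIset.simple_mem d.cs hi) hzW
    have hle := d.cs.length_mul_le (d.cs.simple i) z
    rw [d.cs.length_simple] at hle
    rcases d.cs.length_simple_mul z i with hup | hdn
    · rw [T_mul_left_up d hup]
      exact Submodule.subset_span ⟨_, ⟨hmem, by omega⟩, rfl⟩
    · rw [T_mul_left_down d hdn]
      refine Submodule.add_mem _ ?_ ?_
      · rw [← Algebra.smul_def]
        exact Submodule.smul_mem _ _ (Submodule.subset_span ⟨_, ⟨hzW, by omega⟩, rfl⟩)
      · exact Submodule.subset_span ⟨_, ⟨hmem, by omega⟩, rfl⟩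
  | zero => rw [mul_zero]; exact Submodule.zero_mem _
  | add x y _ _ hx hy => rw [mul_add]; exact Submodule.add_mem _ hx hy
  | smul a x _ hx => rw [mul_smul_comm]; exact Submodule.smul_mem _ _ hx

lemma barT_triangular (I : Set B) (ω : List B) (hred : d.cs.IsReduced ω)
    (hsub : ∀ i ∈ ω, i ∈ I) :
    d.bar (d.bT (d.cs.wordProd ω)) - d.bT (d.cs.wordProd ω) ∈ Tspan d I ω.length := by
  induction ω with
  | nil =>
    rw [d.cs.wordProd_nil, T_one, map_one, sub_self]
    exact Submodule.zero_mem _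
  | cons i ω ih =>
    obtain ⟨hred2, hlen2⟩ := isReduced_cons d.cs hred
    have hr' := ih hred2 (fun j hj => hsub j (List.mem_cons.mpr (Or.inr hj)))
    set x' := d.cs.wordProd ω with hx'
    set r' := d.bar (d.bT x') - d.bT x' with hr'def
    have hbar : d.bar (d.bT (d.cs.wordProd (i :: ω)))
        = (d.bT (d.cs.simple i) - algebraMap (A Γ) H (xiL d i)) * (d.bT x' + r') := by
      rw [d.cs.wordProd_cons, ← T_mul_left_up d hlen2, map_mul, bar_T_simple]
      congr 1
      rw [hr'def]
      abel
    have hsplit : d.bar (d.bT (d.cs.wordProd (i :: ω))) - d.bT (d.cs.wordProd (i :: ω))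
        = d.bT (d.cs.simple i) * r' - xiL d i • d.bT x' - xiL d i • r' := by
      rw [hbar, d.cs.wordProd_cons, ← T_mul_left_up d hlen2, Algebra.smul_def,
        Algebra.smul_def, sub_mul, mul_add, mul_add]
      abel
    rw [hsplit]
    have hx'mem : x' ∈ WIset d.cs I :=
      ⟨ω, fun j hj => hsub j (List.mem_cons.mpr (Or.inr hj)), hx'⟩
    have hx'len : d.cs.length x' < (i :: ω).length := by
      have hh : d.cs.length x' = ω.length := hred2
      simp only [List.length_cons]
      omega
    refine Submodule.sub_mem _ (Submodule.sub_mem _ ?_ ?_) ?_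
    · have hts := mul_Ts_span d (hsub i (List.mem_cons_self)) hr'
      have hlen : ω.length + 1 = (i :: ω).length := by simp
      rw [hlen] at hts
      exact hts
    · refine Submodule.smul_mem (Tspan d I (i :: ω).length) _ (Submodule.subset_span ?_)
      exact ⟨_, ⟨hx'mem, hx'len⟩, rfl⟩
    · exact Submodule.smul_mem (Tspan d I (i :: ω).length) _
        (Tspan_mono d I (by rw [List.length_cons]; omega) hr')

lemma mem_WIset_univ (x : W) : x ∈ WIset d.cs Set.univ := by
  obtain ⟨ν, _, hν⟩ := d.cs.exists_reduced_word' x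
  exact ⟨ν, fun i _ => Set.mem_univ i, hν⟩

lemma barT_decomp {I : Set B} {x : W} (hx : x ∈ WIset d.cs I) :
    d.bar (d.bT x) - d.bT x ∈ Tspan d I (d.cs.length x) := by
  obtain ⟨ν, hred, hsub, hx'⟩ := WIset.exists_reduced d.cs hx
  have hlen : ν.length = d.cs.length x := by
    have hh : d.cs.length (d.cs.wordProd ν) = ν.length := hred
    rw [← hx'] at hh; omega
  rw [← hlen, hx']
  exact barT_triangular d I ν hred hsub

lemma barT_repr_eq {I : Set B} {x : W} (hx : x ∈ WIset d.cs I) (z : W) :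
    d.bT.repr (d.bar (d.bT x)) z
      = (Finsupp.single x (1 : A Γ)) z
        + d.bT.repr (d.bar (d.bT x) - d.bT x) z := by
  rw [map_sub, Finsupp.sub_apply, Module.Basis.repr_self]
  ring

lemma barT_repr_self (x : W) : d.bT.repr (d.bar (d.bT x)) x = 1 := by
  rw [barT_repr_eq d (mem_WIset_univ d x) x, Finsupp.single_eq_same,
    repr_span_zero d.bT _ (barT_decomp d (mem_WIset_univ d x)) (by
      intro hmem
      exact absurd hmem.2 (lt_irrefl _)), add_zero]

lemma barT_repr_len {x z : W} (hzx : z ≠ x)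
    (hne : d.bT.repr (d.bar (d.bT x)) z ≠ 0) : d.cs.length z < d.cs.length x := by
  rw [barT_repr_eq d (mem_WIset_univ d x) z, Finsupp.single_eq_of_ne' hzx.symm, zero_add] at hne
  by_contra hcon
  exact hne (repr_span_zero d.bT _ (barT_decomp d (mem_WIset_univ d x))
    (fun hmem => hcon hmem.2))

lemma barT_repr_WI {I : Set B} {x : W} (hx : x ∈ WIset d.cs I) {z : W}
    (hne : d.bT.repr (d.bar (d.bT x)) z ≠ 0) :
    z = x ∨ (z ∈ WIset d.cs I ∧ d.cs.length z < d.cs.length x) := by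
  by_cases hzx : z = x
  · exact Or.inl hzx
  · right
    rw [barT_repr_eq d hx z, Finsupp.single_eq_of_ne' (Ne.symm hzx), zero_add] at hne
    by_contra hcon
    exact hne (repr_span_zero d.bT _ (barT_decomp d hx) hcon)

lemma bar_coeff {h : H} (hbar : d.bar h = h) (z : W) :
    d.bT.repr h z
      = ∑ x ∈ (d.bT.repr h).support,
          barA (d.bT.repr h x) * d.bT.repr (d.bar (d.bT x)) z := by
  have hrep : h = ∑ x ∈ (d.bT.repr h).support, d.bT.repr h x • d.bT x := by
    have h1 := d.bT.linearCombination_repr h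
    rw [Finsupp.linearCombination_apply, Finsupp.sum] at h1
    exact h1.symm
  have h2 : d.bar h = ∑ x ∈ (d.bT.repr h).support,
      barA (d.bT.repr h x) • d.bar (d.bT x) := by
    conv_lhs => rw [hrep]
    rw [map_sum]
    exact Finset.sum_congr rfl (fun x _ => bar_smul d _ _)
  have h3 : d.bT.repr h z = d.bT.repr (∑ x ∈ (d.bT.repr h).support,
      barA (d.bT.repr h x) • d.bar (d.bT x)) z := by
    rw [← h2, hbar]
  rw [h3, map_sum, Finsupp.finset_sum_apply]
  exact Finset.sum_congr rfl fun x _ => by rw [map_smul, Finsupp.smul_apply, smul_eq_mul]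

/-- Triangularity of the KL basis element `C_{d0}` with respect to the parabolic
generated by the letters of a reduced word for `d0`. -/
lemma C_triangular (d0 : W) (ωd : List B) (hred : d.cs.IsReduced ωd)
    (hw : d0 = d.cs.wordProd ωd) :
    d.bT.repr (d.C d0) d0 = 1 ∧
    ∀ y, d.bT.repr (d.C d0) y ≠ 0 → y ≠ d0 →
      y ∈ WIset d.cs {i | i ∈ ωd} ∧ d.cs.length y < d.cs.length d0 := by
  set I : Set B := {i | i ∈ ωd} with hI
  set a : W →₀ A Γ := d.bT.repr (d.C d0) with ha
  have hbar : d.bar (d.C d0) = d.C d0 := d.bar_C d0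
  have key : ∀ z, a z = ∑ x ∈ a.support,
      barA (a x) * d.bT.repr (d.bar (d.bT x)) z := fun z => bar_coeff d hbar z
  have halt : ∀ y, y ≠ d0 → a y ∈ Alt0 Γ := by
    intro y hy
    have h1 := d.C_mod d0 y
    rw [map_sub, Finsupp.sub_apply, Module.Basis.repr_self,
      Finsupp.single_eq_of_ne' (Ne.symm hy), sub_zero] at h1
    exact h1
  have hd0a : a d0 - 1 ∈ Alt0 Γ := by
    have h1 := d.C_mod d0 d0
    rwa [map_sub, Finsupp.sub_apply, Module.Basis.repr_self, Finsupp.single_eq_same] at h1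
  have hd0S : d0 ∈ a.support := Finsupp.mem_support_iff.mpr (a_sub_one_alt0_ne_zero hd0a)
  have hmax : ∀ y ∈ a.support, (∀ x ∈ a.support, d.cs.length x ≤ d.cs.length y) → y = d0 := by
    intro y hyS hymax
    have h1 : a y = barA (a y) := by
      have h2 := key y
      rw [Finset.sum_eq_single_of_mem y hyS (by
        intro x hxS hxy
        by_cases hz : d.bT.repr (d.bar (d.bT x)) y = 0
        · rw [hz, mul_zero]
        · exact absurd (hymax x hxS) (not_le.mpr (barT_repr_len d (Ne.symm hxy) hz)))] at h2
      rw [barT_repr_self, mul_one] at h2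
      exact h2
    by_contra hne
    exact (Finsupp.mem_support_iff.mp hyS) (barA_fixed_alt0 h1.symm (halt y hne))
  have hlen_le : ∀ y ∈ a.support, d.cs.length y ≤ d.cs.length d0 := by
    obtain ⟨y0, hy0S, hy0max⟩ := a.support.exists_max_image
      (fun y => d.cs.length y) ⟨d0, hd0S⟩
    have hy0 := hmax y0 hy0S hy0max
    subst hy0
    exact hy0max
  have hstrict : ∀ y ∈ a.support, y ≠ d0 → d.cs.length y < d.cs.length d0 := by
    intro y hyS hne
    rcases lt_or_eq_of_le (hlen_le y hyS) with h | h
    · exact h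
    · exact absurd (hmax y hyS (fun x hx => le_trans (hlen_le x hx) (le_of_eq h.symm))) hne
  have had0 : a d0 = 1 := by
    have h1 : a d0 = barA (a d0) := by
      have h2 := key d0
      rw [Finset.sum_eq_single_of_mem d0 hd0S (by
        intro x hxS hxy
        by_cases hz : d.bT.repr (d.bar (d.bT x)) d0 = 0
        · rw [hz, mul_zero]
        · exact absurd (hlen_le x hxS) (not_le.mpr (barT_repr_len d (Ne.symm hxy) hz)))] at h2
      rw [barT_repr_self, mul_one] at h2
      exact h2
    have h2 : barA (a d0 - 1) = a d0 - 1 := by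
      rw [map_sub, barA_one, ← h1]
    have h3 := barA_fixed_alt0 h2 hd0a
    have h4 : a d0 - 1 = 0 := h3
    linear_combination h4
  have hd0WI : d0 ∈ WIset d.cs I := ⟨ωd, fun i hi => hi, hw⟩
  have hWI : ∀ y ∈ a.support, y ∈ WIset d.cs I := by
    by_contra hcon
    push_neg at hcon
    obtain ⟨yb, hybS, hybN⟩ := hcon
    set N := a.support.filter (fun y => y ∉ WIset d.cs I) with hN
    have hNne : N.Nonempty := ⟨yb, Finset.mem_filter.mpr ⟨hybS, hybN⟩⟩
    obtain ⟨y0, hy0N, hy0max⟩ := N.exists_max_image (fun y => d.cs.length y) hNne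
    have hy0S : y0 ∈ a.support := (Finset.mem_filter.mp hy0N).1
    have hy0W : y0 ∉ WIset d.cs I := (Finset.mem_filter.mp hy0N).2
    have h1 : a y0 = barA (a y0) := by
      have h2 := key y0
      rw [Finset.sum_eq_single_of_mem y0 hy0S (by
        intro x hxS hxy
        by_cases hz : d.bT.repr (d.bar (d.bT x)) y0 = 0
        · rw [hz, mul_zero]
        · exfalso
          by_cases hxW : x ∈ WIset d.cs I
          · rcases barT_repr_WI d hxW hz with h | h
            · exact hxy h.symm
            · exact hy0W h.1
          · have hxN : x ∈ N := Finset.mem_filter.mpr ⟨hxS, hxW⟩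
            rcases barT_repr_WI d (mem_WIset_univ d x) hz with h | h
            · exact hxy h.symm
            · exact absurd (hy0max x hxN) (not_le.mpr h.2))] at h2
      rw [barT_repr_self, mul_one] at h2
      exact h2
    have hne : y0 ≠ d0 := fun h => hy0W (h ▸ hd0WI)
    exact (Finsupp.mem_support_iff.mp hy0S) (barA_fixed_alt0 h1.symm (halt y0 hne))
  refine ⟨had0, fun y hne hyd0 => ⟨hWI y (Finsupp.mem_support_iff.mpr hne), ?_⟩⟩
  exact hstrict y (Finsupp.mem_support_iff.mpr hne) hyd0


lemma C_decomp (d0 : W) :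
    d.C d0 = ∑ y ∈ (d.bT.repr (d.C d0)).support, d.bT.repr (d.C d0) y • d.bT y := by
  have h1 := d.bT.linearCombination_repr (d.C d0)
  rw [Finsupp.linearCombination_apply, Finsupp.sum] at h1
  exact h1.symm

lemma bC_decomp (h : H) :
    h = ∑ y ∈ (d.bC.repr h).support, d.bC.repr h y • d.bC y := by
  have h1 := d.bC.linearCombination_repr h
  rw [Finsupp.linearCombination_apply, Finsupp.sum] at h1
  exact h1.symm

section Cells

variable {c : Set W}

lemma ltc_of_leLstep (hcell : d.IsTwoSidedCell c) {z w : W} (hz : d.ltc c z)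
    (hstep : d.leLstep w z) : d.ltc c w := by
  have hwz : d.leLR w z := Relation.ReflTransGen.single (Or.inl hstep)
  constructor
  · intro hwc
    have hzw : d.leLR z w := hz.2 w hwc
    obtain ⟨x0, hc⟩ := hcell
    have hx0w : d.simLR x0 w := by
      rw [hc] at hwc
      exact hwc
    have hx0z : d.simLR x0 z := ⟨hx0w.1.trans hwz, hzw.trans hx0w.2⟩
    exact hz.1 (by rw [hc]; exact hx0z)
  · intro w' hw'
    exact hwz.trans (hz.2 w' hw')

lemma Hltc_mul_left (hcell : d.IsTwoSidedCell c) (g : H) {h : H}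
    (hh : h ∈ d.Hltc c) : g * h ∈ d.Hltc c := by
  induction hh using Submodule.span_induction with
  | mem x hx =>
    obtain ⟨z, hz, rfl⟩ := hx
    have hclaim : ∀ x0 : W, d.bC x0 * d.C z ∈ d.Hltc c := by
      intro x0
      have hrep := bC_decomp d (d.bC x0 * d.C z)
      rw [hrep]
      refine Submodule.sum_mem _ (fun w hw => Submodule.smul_mem _ _ ?_)
      refine Submodule.subset_span ⟨w, ?_, rfl⟩
      refine ltc_of_leLstep d hcell hz ⟨x0, ?_⟩
      exact Finsupp.mem_support_iff.mp hw
    have hg := bC_decomp d g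
    rw [hg, Finset.sum_mul]
    refine Submodule.sum_mem _ (fun x0 _ => ?_)
    rw [smul_mul_assoc]
    exact Submodule.smul_mem _ _ (hclaim x0)
  | zero => rw [mul_zero]; exact Submodule.zero_mem _
  | add x y _ _ hx hy => rw [mul_add]; exact Submodule.add_mem _ hx hy
  | smul a x _ hx => rw [mul_smul_comm]; exact Submodule.smul_mem _ _ hx

lemma T_mul_C_lower (cd : CellDecomp d c) {d0 : W} (hd0 : d0 ∈ cd.D) :
    ∀ ω : List B, d.cs.IsReduced ω →
      (∀ i ∈ ω, d.bruhatLE (d.cs.simple i) d0) →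
      ∃ α : A Γ, d.bT (d.cs.wordProd ω) * d.C d0 - α • d.C d0 ∈ d.Hltc c := by
  intro ω
  induction ω with
  | nil =>
    intro _ _
    refine ⟨1, ?_⟩
    rw [d.cs.wordProd_nil, T_one, one_mul, one_smul, sub_self]
    exact Submodule.zero_mem _
  | cons i ω ih =>
    intro hred hb
    obtain ⟨hred2, hlen2⟩ := isReduced_cons d.cs hred
    obtain ⟨α', hα'⟩ := ih hred2 (fun j hj => hb j (List.mem_cons.mpr (Or.inr hj)))
    obtain ⟨β, hβ⟩ := cd.TsC d0 hd0 i (hb i (List.mem_cons_self))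
    refine ⟨β * α', ?_⟩
    set X := d.bT (d.cs.wordProd ω) * d.C d0 with hX
    have hident : d.bT (d.cs.simple i) * X - (β * α') • d.C d0
        = d.bT (d.cs.simple i) * (X - α' • d.C d0)
          + α' • (d.bT (d.cs.simple i) * d.C d0 - β • d.C d0) := by
      rw [mul_sub, smul_sub, mul_smul_comm, smul_smul, mul_comm α' β]
      abel
    have hgoal : d.bT (d.cs.wordProd (i :: ω)) * d.C d0 - (β * α') • d.C d0
        = d.bT (d.cs.simple i) * X - (β * α') • d.C d0 := by
      rw [hX, d.cs.wordProd_cons, ← T_mul_left_up d hlen2, mul_assoc]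
    rw [hgoal, hident]
    refine Submodule.add_mem _ ?_ ?_
    · exact Hltc_mul_left d cd.isCell _ hα'
    · exact Submodule.smul_mem _ _ hβ

end Cells

section Statements

variable {c : Set W} (cd : CellDecomp d c)

lemma statement_parts {d0 : W} (hd0 : d0 ∈ cd.D) :
    (∀ u ∈ cd.Ud d0, d.C d0 * d.T u - d.T (d0 * u) ∈ d.Hlt0) ∧
    (d.C d0 * d.C d0 - d.hk d0 d0 d0 • d.C d0 ∈ d.Hltc c) := by
  obtain ⟨ωd, hred, hw⟩ := d.cs.exists_reduced_word' d0
  set I : Set B := {i | i ∈ ωd} with hI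
  obtain ⟨had0, htri⟩ := C_triangular d d0 ωd hred hw
  set a : W →₀ A Γ := d.bT.repr (d.C d0) with ha
  have hbru : ∀ i ∈ ωd, d.bruhatLE (d.cs.simple i) d0 := by
    intro i hi
    have h1 := bruhat_letter d.cs ωd hred i hi
    rw [hw]
    exact h1
  have hd0WI : d0 ∈ WIset d.cs I := ⟨ωd, fun i hi => hi, hw⟩
  have hsuppWI : ∀ y ∈ a.support, y ∈ WIset d.cs I := by
    intro y hy
    by_cases hyd : y = d0
    · rw [hyd]; exact hd0WI
    · exact (htri y (Finsupp.mem_support_iff.mp hy) hyd).1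
  have hd0S : d0 ∈ a.support := by
    rw [ha, Finsupp.mem_support_iff, had0]
    exact one_ne_zero
  have halt : ∀ y, y ≠ d0 → a y ∈ Alt0 Γ := by
    intro y hy
    have h1 := d.C_mod d0 y
    rwa [map_sub, Finsupp.sub_apply, Module.Basis.repr_self,
      Finsupp.single_eq_of_ne' (Ne.symm hy), sub_zero] at h1
  constructor
  · -- part 1
    intro u hu
    have hmin : ∀ i : B, (d.cs.simple i : W) ∈ WIset d.cs I →
        d.cs.length (d.cs.simple i * u) = d.cs.length u + 1 := by
      intro i hiW
      obtain ⟨ν, hνred, hνI, hνe⟩ := WIset.exists_reduced d.cs hiW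
      have hν1 : ν.length = 1 := by
        have hh : d.cs.length (d.cs.wordProd ν) = ν.length := hνred
        rw [← hνe, d.cs.length_simple] at hh
        omega
      obtain ⟨i1, rfl⟩ := List.length_eq_one_iff.mp hν1
      have hsi : d.cs.simple i = d.cs.simple i1 := by
        rw [hνe, d.cs.wordProd_cons, d.cs.wordProd_nil, mul_one]
      have hbru1 : d.bruhatLE (d.cs.simple i) d0 := by
        rw [hsi]
        exact hbru i1 (hνI i1 (List.mem_singleton_self i1))
      exact cd.s_len d0 hd0 i hbru1 u hu
    have hadd : ∀ y ∈ WIset d.cs I,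
        d.cs.length (y * u) = d.cs.length y + d.cs.length u :=
      WIset.length_add d.cs I (d.cs.length u) u rfl hmin
    have hT : ∀ y ∈ a.support, d.bT y * d.bT u = d.bT (y * u) := by
      intro y hy
      exact d.T_mul y u (hadd y (hsuppWI y hy))
    have hmul : d.C d0 * d.T u = ∑ y ∈ a.support, a y • d.bT (y * u) := by
      show d.C d0 * d.bT u = _
      conv_lhs => rw [C_decomp d d0]
      rw [Finset.sum_mul]
      exact Finset.sum_congr rfl fun y hy => by rw [smul_mul_assoc, hT y hy]
    have hsum : d.C d0 * d.T u - d.T (d0 * u)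
        = ∑ y ∈ a.support.erase d0, a y • d.bT (y * u) := by
      rw [hmul, ← Finset.add_sum_erase _ _ hd0S]
      have h1 : a d0 • d.bT (d0 * u) = d.T (d0 * u) := by
        rw [had0, one_smul]
        rfl
      rw [h1]
      abel
    intro w
    rw [hsum, map_sum, Finsupp.finset_sum_apply]
    refine alt0_sum _ _ (fun y hy => ?_)
    rw [map_smul, Finsupp.smul_apply, Module.Basis.repr_self, smul_eq_mul, Finsupp.single_apply]
    split_ifs with hcase
    · rw [mul_one]
      exact halt y (Finset.ne_of_mem_erase hy)
    · rw [mul_zero]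
      exact alt0_zero
  · -- part 2
    have hyC : ∀ y : W, ∃ α : A Γ, y ∈ a.support →
        d.bT y * d.C d0 - α • d.C d0 ∈ d.Hltc c := by
      intro y
      by_cases hy : y ∈ a.support
      · obtain ⟨ν, hνred, hνI, hνy⟩ := WIset.exists_reduced d.cs (hsuppWI y hy)
        obtain ⟨α, hα⟩ := T_mul_C_lower d cd hd0 ν hνred (fun i hi => hbru i (hνI i hi))
        rw [← hνy] at hα
        exact ⟨α, fun _ => hα⟩
      · exact ⟨0, fun h => absurd h hy⟩
    choose α hα using hyC
    set β : A Γ := ∑ y ∈ a.support, a y * α y with hβ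
    have hmem : d.C d0 * d.C d0 - β • d.C d0 ∈ d.Hltc c := by
      have hCC : d.C d0 * d.C d0 = ∑ y ∈ a.support, a y • (d.bT y * d.C d0) := by
        conv_lhs => rw [show d.C d0 * d.C d0
          = (∑ y ∈ a.support, a y • d.bT y) * d.C d0 from by rw [← C_decomp d d0]]
        rw [Finset.sum_mul]
        exact Finset.sum_congr rfl fun y _ => by rw [smul_mul_assoc]
      have hsplit : d.C d0 * d.C d0 - β • d.C d0
          = ∑ y ∈ a.support, a y • (d.bT y * d.C d0 - α y • d.C d0) := by
        rw [hCC, hβ, Finset.sum_smul, ← Finset.sum_sub_distrib]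
        exact Finset.sum_congr rfl fun y _ => by rw [smul_sub, smul_smul]
      rw [hsplit]
      exact Submodule.sum_mem _ (fun y hy => Submodule.smul_mem _ _ (hα y hy))
    have hβeq : d.hk d0 d0 d0 = β := by
      have h0 : d.bC.repr (d.C d0 * d.C d0 - β • d.C d0) d0 = 0 := by
        refine repr_span_zero d.bC _ hmem (fun hmem0 => ?_)
        exact hmem0.1 (cd.D_sub hd0)
      rw [map_sub, map_smul, Finsupp.sub_apply, Finsupp.smul_apply] at h0
      have h1 : d.bC.repr (d.C d0) d0 = 1 := by
        show d.bC.repr (d.bC d0) d0 = 1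
        rw [Module.Basis.repr_self, Finsupp.single_eq_same]
      rw [h1, smul_eq_mul, mul_one] at h0
      have h2 : d.hk d0 d0 d0 = d.bC.repr (d.C d0 * d.C d0) d0 := rfl
      rw [h2]
      linear_combination h0
    rw [hβeq]
    exact hmem

end Statements


end Hecke

end KLProof

/-- under Assumption (*), `C_d T_u ≡ T_{du} mod H_{<0}` for `u ∈ U_d`,
and `C_d C_d ≡ h_{d,d,d} C_d mod H_{<c}`. -/
theorem statement_1 {B W : Type} [Group W] {M : CoxeterMatrix B} {Γ : Type}
    [AddCommGroup Γ] [LinearOrder Γ] [IsOrderedAddMonoid Γ] {H : Type} [Ring H] [Algebra (A Γ) H]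
    (d : KLData M W Γ H) (c : Set W) (cd : CellDecomp d c) :
    (∀ d0 ∈ cd.D, ∀ u ∈ cd.Ud d0, d.C d0 * d.T u - d.T (d0 * u) ∈ d.Hlt0) ∧
    (∀ d0 ∈ cd.D, d.C d0 * d.C d0 - d.hk d0 d0 d0 • d.C d0 ∈ d.Hltc c) := by
  constructor
  · intro d0 hd0
    exact (KLProof.statement_parts d cd hd0).1
  · intro d0 hd0
    exact (KLProof.statement_parts d cd hd0).2
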